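/- Let f(x) = |x|^2/2 on R^n and h: R → R differentiable. A non-horizontal, non-vertical hyperplane Σ_{i=1}^n a_i x_i + x_{n+1} + c = 0 (with (a_1,...,a_n) ≠ 0) in R^n × R with density e^{-(f+h)} is weighted minimal if and only if h(t) = t^2/2 + c t + b for some constant b ∈ R. -/

import Mathlib

/-- A non-horizontal, non-vertical hyperplane
`Σ aᵢxᵢ + x_{n+1} + c = 0` with `(a₁,…,aₙ) ≠ 0` in ℝⁿ × ℝ with density `e^{-(f+h)}`,
`f(x) = |x|²/2`, is weighted minimal (i.e. `Σ aᵢxᵢ + h'(x_{n+1}) = 0` at every point of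
the hyperplane) if and only if `h(t) = t²/2 + c·t + b` for some constant `b ∈ ℝ`. -/
theorem nonhorizontal_hyperplane_weighted_minimal_iff
    (n : ℕ) (a : Fin n → ℝ) (ha : a ≠ 0) (c : ℝ)
    (h : ℝ → ℝ) (hdiff : Differentiable ℝ h) :
    (∀ (x : EuclideanSpace ℝ (Fin n)) (t : ℝ),
        (∑ i, a i * x i) + t + c = 0 →
        (∑ i, a i * x i) + deriv h t = 0) ↔
    (∃ b : ℝ, ∀ t : ℝ, h t = t ^ 2 / 2 + c * t + b) := by
  obtain ⟨i, hi⟩ : ∃ i, a i ≠ 0 := by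
    by_contra hc
    push_neg at hc
    exact ha (funext fun j => hc j)
  constructor
  · intro H
    have key : ∀ t : ℝ, deriv h t = t + c := by
      intro t
      set x : EuclideanSpace ℝ (Fin n) :=
        WithLp.toLp 2 (fun j => if j = i then (-(t + c)) / a i else 0) with hx
      have hsum : (∑ j, a j * x j) = -(t + c) := by
        rw [Finset.sum_eq_single i]
        · simp [hx]
          field_simp
        · intro j _ hj; simp [hx, hj]
        · simp
      have := H x t (by rw [hsum]; ring)
      rw [hsum] at this; linarith
    set g : ℝ → ℝ := fun t => h t - (t ^ 2 / 2 + c * t) with hg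
    have hgd : Differentiable ℝ g := by
      apply hdiff.sub
      fun_prop
    have hgz : ∀ t, deriv g t = 0 := by
      intro t
      have h2 : deriv (fun t : ℝ => t ^ 2 / 2 + c * t) t = t + c := by
        rw [deriv_fun_add (by fun_prop) (by fun_prop), deriv_div_const, deriv_pow_field,
          deriv_const_mul _ (by fun_prop), deriv_id'']
        ring
      rw [hg, deriv_fun_sub (hdiff t) (by fun_prop), h2, key t]
      ring
    refine ⟨g 0, fun t => ?_⟩
    have : g t = g 0 := is_const_of_deriv_eq_zero hgd hgz t 0
    simp only [hg] at this ⊢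
    linarith
  · rintro ⟨b, hb⟩ x t hxt
    have hfun : h = fun t => t ^ 2 / 2 + c * t + b := funext hb
    have : deriv h t = t + c := by
      rw [hfun, deriv_fun_add (by fun_prop) (by fun_prop),
        deriv_fun_add (by fun_prop) (by fun_prop), deriv_div_const, deriv_pow_field,
        deriv_const_mul _ (by fun_prop), deriv_id'', deriv_const]
      ring
    rw [this]; linarith
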